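/- arXiv:2107.11720 — 5 statements merged into one kernel-verified Lean document; each statement's English description precedes it below -/
import Mathlib

section
/- Under the Gauss quadrature hypotheses, the pseudo-spectral approximation interpolates the sampled values: for every j = 1, …, N+1, u^{(N)}(ξ_j) = u(ξ_j). -/
open MeasureTheory

universe u

/-- `c(k) = ∫ P_k² dμ`. -/
noncomputable def cCoeff {n : ℕ} (μ : Measure ℝ) (P : Fin n → Polynomial ℝ)
    (k : Fin n) : ℝ :=
  ∫ x, ((P k).eval x) ^ 2 ∂μ

/-- The exact chaos coefficient `u_k = ∫ u(ξ) P_k(ξ) μ(dξ)`. -/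
noncomputable def chaosCoeff {n : ℕ} {H : Type u} [NormedAddCommGroup H]
    [InnerProductSpace ℝ H] [CompleteSpace H]
    (μ : Measure ℝ) (P : Fin n → Polynomial ℝ) (u : ℝ → H) (k : Fin n) : H :=
  ∫ x, (P k).eval x • u x ∂μ

/-- The truncated chaos expansion `u^N(t) = Σ_k (u_k / c(k)) P_k(t)`. -/
noncomputable def truncExp {n : ℕ} {H : Type u} [NormedAddCommGroup H]
    [InnerProductSpace ℝ H] [CompleteSpace H]
    (μ : Measure ℝ) (P : Fin n → Polynomial ℝ) (u : ℝ → H) (t : ℝ) : H :=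
  ∑ k : Fin n, ((cCoeff μ P k)⁻¹ * (P k).eval t) • chaosCoeff μ P u k

/-- The Gauss-quadrature coefficient `u_k^{(N)} = Σ_j w_j P_k(ξ_j) u(ξ_j)`. -/
noncomputable def quadCoeff {n : ℕ} {H : Type u} [NormedAddCommGroup H]
    [InnerProductSpace ℝ H] [CompleteSpace H]
    (P : Fin n → Polynomial ℝ) (ξ w : Fin n → ℝ) (u : ℝ → H) (k : Fin n) : H :=
  ∑ j : Fin n, (w j * (P k).eval (ξ j)) • u (ξ j)

/-- The pseudo-spectral approximation `u^{(N)}(t) = Σ_k (u_k^{(N)} / c(k)) P_k(t)`. -/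
noncomputable def pseudoSpec {n : ℕ} {H : Type u} [NormedAddCommGroup H]
    [InnerProductSpace ℝ H] [CompleteSpace H]
    (μ : Measure ℝ) (P : Fin n → Polynomial ℝ) (ξ w : Fin n → ℝ)
    (u : ℝ → H) (t : ℝ) : H :=
  ∑ k : Fin n, ((cCoeff μ P k)⁻¹ * (P k).eval t) • quadCoeff P ξ w u k

/-- The pseudo-spectral approximation interpolates the sampled values:
`u^{(N)}(ξ_j) = u(ξ_j)` for every quadrature node `ξ_j`. -/
theorem pseudoSpec_interpolates
    (μ : Measure ℝ) [IsProbabilityMeasure μ] (N : ℕ) (hN : 1 ≤ N)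
    (P : Fin (N + 1) → Polynomial ℝ)
    (hdeg : ∀ k : Fin (N + 1), (P k).natDegree = (k : ℕ))
    (hint : ∀ p : Polynomial ℝ, Integrable (fun x => p.eval x) μ)
    (horth : ∀ k m : Fin (N + 1), k ≠ m →
      ∫ x, (P k).eval x * (P m).eval x ∂μ = 0)
    (hpos : ∀ k : Fin (N + 1), 0 < cCoeff μ P k)
    (ξ : Fin (N + 1) → ℝ) (w : Fin (N + 1) → ℝ)
    (hw : ∀ j, 0 < w j)
    (hquad : ∀ h : Polynomial ℝ, h.natDegree ≤ 2 * N + 1 →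
      ∫ x, h.eval x ∂μ = ∑ j : Fin (N + 1), w j * h.eval (ξ j))
    (H : Type u) [NormedAddCommGroup H] [InnerProductSpace ℝ H] [CompleteSpace H]
    (u : ℝ → H) (hmeas : StronglyMeasurable u)
    (C : ℝ) (hbdd : ∀ x, ‖u x‖ ≤ C) :
    ∀ j : Fin (N + 1), pseudoSpec μ P ξ w u (ξ j) = u (ξ j) := by
  intro i
  classical
  -- discrete orthogonality
  have hdisc : ∀ k m : Fin (N + 1),
      (∑ j : Fin (N + 1), w j * ((P k).eval (ξ j) * (P m).eval (ξ j)))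
        = if k = m then cCoeff μ P k else 0 := by
    intro k m
    have hd : (P k * P m).natDegree ≤ 2 * N + 1 := by
      have h1 : (P k * P m).natDegree ≤ (P k).natDegree + (P m).natDegree :=
        Polynomial.natDegree_mul_le
      have hk := k.is_le
      have hm := m.is_le
      rw [hdeg, hdeg] at h1
      omega
    have hq := hquad (P k * P m) hd
    simp only [Polynomial.eval_mul] at hq
    rw [← hq]
    split_ifs with h
    · subst h
      simp [cCoeff, sq]
    · exact horth k m h
  set M : Matrix (Fin (N + 1)) (Fin (N + 1)) ℝ :=
    fun k j => Real.sqrt (w j) * (P k).eval (ξ j) / Real.sqrt (cCoeff μ P k) with hM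
  have hMMT : M * M.transpose = 1 := by
    ext k m
    have hterm : ∀ j, M k j * M.transpose j m
        = (Real.sqrt (cCoeff μ P k) * Real.sqrt (cCoeff μ P m))⁻¹
          * (w j * ((P k).eval (ξ j) * (P m).eval (ξ j))) := by
      intro j
      rw [Matrix.transpose_apply]
      simp only [hM]
      rw [div_mul_div_comm,
        show Real.sqrt (w j) * (P k).eval (ξ j) * (Real.sqrt (w j) * (P m).eval (ξ j))
          = (Real.sqrt (w j) * Real.sqrt (w j)) * ((P k).eval (ξ j) * (P m).eval (ξ j)) by ring,
        Real.mul_self_sqrt (hw j).le]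
      field_simp
    rw [Matrix.mul_apply]
    simp only [hterm]
    rw [← Finset.mul_sum, hdisc k m]
    split_ifs with h
    · subst h
      rw [Real.mul_self_sqrt (hpos k).le, Matrix.one_apply_eq]
      exact inv_mul_cancel₀ (hpos k).ne'
    · simp [Matrix.one_apply, h]
  have hMTM : M.transpose * M = 1 := mul_eq_one_comm.mp hMMT
  have hcoef : ∀ j : Fin (N + 1),
      (∑ k : Fin (N + 1),
        (cCoeff μ P k)⁻¹ * (P k).eval (ξ i) * (w j * (P k).eval (ξ j)))
        = if j = i then 1 else 0 := by
    intro j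
    have hentry := congrArg (fun A => A j i) hMTM
    simp only [Matrix.mul_apply, Matrix.transpose_apply, Matrix.one_apply] at hentry
    simp only [hM] at hentry
    have hsq : ∀ k : Fin (N + 1),
        Real.sqrt (w j) * (P k).eval (ξ j) / Real.sqrt (cCoeff μ P k)
          * (Real.sqrt (w i) * (P k).eval (ξ i) / Real.sqrt (cCoeff μ P k))
        = (Real.sqrt (w j) * Real.sqrt (w i))
            * ((cCoeff μ P k)⁻¹ * (P k).eval (ξ i) * (P k).eval (ξ j)) := by
      intro k
      rw [div_mul_div_comm, Real.mul_self_sqrt (hpos k).le, div_eq_mul_inv]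
      ring
    rw [Finset.sum_congr rfl (fun k _ => hsq k), ← Finset.mul_sum] at hentry
    have hterm2 : ∀ k : Fin (N + 1),
        (cCoeff μ P k)⁻¹ * (P k).eval (ξ i) * (w j * (P k).eval (ξ j))
        = w j * ((cCoeff μ P k)⁻¹ * (P k).eval (ξ i) * (P k).eval (ξ j)) := by
      intro k; ring
    rw [Finset.sum_congr rfl (fun k _ => hterm2 k), ← Finset.mul_sum]
    by_cases h : j = i
    · subst h
      simp only [if_pos rfl] at hentry ⊢
      have hwj : Real.sqrt (w j) * Real.sqrt (w j) = w j := Real.mul_self_sqrt (hw j).le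
      rw [hwj] at hentry
      exact hentry
    · simp only [if_neg h] at hentry ⊢
      have hne : Real.sqrt (w j) * Real.sqrt (w i) ≠ 0 :=
        mul_ne_zero (Real.sqrt_ne_zero'.mpr (hw j)) (Real.sqrt_ne_zero'.mpr (hw i))
      rcases mul_eq_zero.mp hentry with h' | h'
      · exact absurd h' hne
      · rw [h', mul_zero]
  simp only [pseudoSpec, quadCoeff, Finset.smul_sum, smul_smul]
  rw [Finset.sum_comm]
  have : ∀ j : Fin (N + 1),
      (∑ k : Fin (N + 1),
        ((cCoeff μ P k)⁻¹ * (P k).eval (ξ i) * (w j * (P k).eval (ξ j))) • u (ξ j))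
      = (if j = i then (1 : ℝ) else 0) • u (ξ j) := by
    intro j
    rw [← Finset.sum_smul, hcoef j]
  rw [Finset.sum_congr rfl (fun j _ => this j)]
  simp
end

section
/- Under the Gauss quadrature hypotheses, suppose δ ≥ 0 is such that ‖u(ξ_j) − u^N(ξ_j)‖_H ≤ δ for every j = 1, …, N+1. Then for every k = 0, …, N, the coefficient error satisfies ‖u_k − u_k^{(N)}‖_H² ≤ δ² · c(k). -/
open MeasureTheory

universe u

/-- Coefficient error bound for the pseudo-spectral (discrete projection)
approximation: `‖u_k − u_k^{(N)}‖² ≤ δ²·c(k)`. -/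
theorem quadCoeff_error_bound
    (μ : Measure ℝ) [IsProbabilityMeasure μ] (N : ℕ) (hN : 1 ≤ N)
    (P : Fin (N + 1) → Polynomial ℝ)
    (hdeg : ∀ k : Fin (N + 1), (P k).natDegree = (k : ℕ))
    (hint : ∀ p : Polynomial ℝ, Integrable (fun x => p.eval x) μ)
    (horth : ∀ k m : Fin (N + 1), k ≠ m →
      ∫ x, (P k).eval x * (P m).eval x ∂μ = 0)
    (hpos : ∀ k : Fin (N + 1), 0 < cCoeff μ P k)
    (ξ : Fin (N + 1) → ℝ) (w : Fin (N + 1) → ℝ)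
    (hw : ∀ j, 0 < w j)
    (hquad : ∀ h : Polynomial ℝ, h.natDegree ≤ 2 * N + 1 →
      ∫ x, h.eval x ∂μ = ∑ j : Fin (N + 1), w j * h.eval (ξ j))
    (H : Type u) [NormedAddCommGroup H] [InnerProductSpace ℝ H] [CompleteSpace H]
    (u : ℝ → H) (hmeas : StronglyMeasurable u)
    (C : ℝ) (hbdd : ∀ x, ‖u x‖ ≤ C)
    (δ : ℝ) (hδ : 0 ≤ δ)
    (happrox : ∀ j : Fin (N + 1), ‖u (ξ j) - truncExp μ P u (ξ j)‖ ≤ δ) :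
    ∀ k : Fin (N + 1),
      ‖chaosCoeff μ P u k - quadCoeff P ξ w u k‖ ^ 2 ≤ δ ^ 2 * cCoeff μ P k := by

  intro k
  have hklt : (k : ℕ) ≤ N := Nat.lt_succ_iff.mp k.isLt
  -- quadrature sum of weights is 1
  have hsum_w : ∑ j : Fin (N + 1), w j = 1 := by
    have h1 := hquad 1 (by simp)
    simp only [Polynomial.eval_one, mul_one] at h1
    simpa using h1.symm
  -- quadrature exact on products P_k * P_m
  have hquad_pair : ∀ m : Fin (N + 1),
      ∑ j : Fin (N + 1), w j * ((P k).eval (ξ j) * (P m).eval (ξ j)) =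
        ∫ x, (P k).eval x * (P m).eval x ∂μ := by
    intro m
    have hmlt : (m : ℕ) ≤ N := Nat.lt_succ_iff.mp m.isLt
    have hd : (P k * P m).natDegree ≤ 2 * N + 1 := by
      refine le_trans (Polynomial.natDegree_mul_le) ?_
      rw [hdeg k, hdeg m]; omega
    have := hquad _ hd
    simp only [Polynomial.eval_mul] at this
    exact this.symm
  have hck : ∑ j : Fin (N + 1), w j * ((P k).eval (ξ j)) ^ 2 = cCoeff μ P k := by
    have h := hquad_pair k
    simp only [← sq] at h
    rw [h]; rfl
  -- key identity: quadrature applied to truncated expansion reproduces the coefficient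
  have key : chaosCoeff μ P u k =
      ∑ j : Fin (N + 1), (w j * (P k).eval (ξ j)) • truncExp μ P u (ξ j) := by
    unfold truncExp
    have : ∀ j : Fin (N + 1),
        (w j * (P k).eval (ξ j)) •
          ∑ m : Fin (N + 1), ((cCoeff μ P m)⁻¹ * (P m).eval (ξ j)) • chaosCoeff μ P u m
        = ∑ m : Fin (N + 1),
            ((w j * (P k).eval (ξ j)) * ((cCoeff μ P m)⁻¹ * (P m).eval (ξ j))) •
              chaosCoeff μ P u m := by
      intro j
      rw [Finset.smul_sum]
      simp [smul_smul]
    rw [Finset.sum_congr rfl (fun j _ => this j), Finset.sum_comm]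
    have hm : ∀ m : Fin (N + 1),
        ∑ j : Fin (N + 1),
          ((w j * (P k).eval (ξ j)) * ((cCoeff μ P m)⁻¹ * (P m).eval (ξ j))) •
            chaosCoeff μ P u m
        = ((cCoeff μ P m)⁻¹ * ∫ x, (P k).eval x * (P m).eval x ∂μ) •
            chaosCoeff μ P u m := by
      intro m
      rw [← Finset.sum_smul, ← hquad_pair m]
      congr 1
      rw [Finset.mul_sum]
      exact Finset.sum_congr rfl (fun j _ => by ring)
    rw [Finset.sum_congr rfl (fun m _ => hm m)]
    rw [Finset.sum_eq_single k]
    · have hc := (hpos k).ne'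
      have : ∫ x, (P k).eval x * (P k).eval x ∂μ = cCoeff μ P k := by
        simp only [← sq]; rfl
      rw [this, inv_mul_cancel₀ hc, one_smul]
    · intro m _ hmk
      rw [horth k m (fun h => hmk h.symm)]
      simp
    · intro h; exact absurd (Finset.mem_univ k) h
  -- the difference as a single sum
  have hdiff : chaosCoeff μ P u k - quadCoeff P ξ w u k =
      ∑ j : Fin (N + 1), (w j * (P k).eval (ξ j)) •
        (truncExp μ P u (ξ j) - u (ξ j)) := by
    rw [key]
    unfold quadCoeff
    rw [← Finset.sum_sub_distrib]
    exact Finset.sum_congr rfl (fun j _ => by rw [smul_sub])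
  -- norm bound
  set S : ℝ := ∑ j : Fin (N + 1), w j * |(P k).eval (ξ j)| with hS
  have hS0 : 0 ≤ S := Finset.sum_nonneg fun j _ =>
    mul_nonneg (hw j).le (abs_nonneg _)
  have hnorm : ‖chaosCoeff μ P u k - quadCoeff P ξ w u k‖ ≤ δ * S := by
    rw [hdiff]
    refine le_trans (norm_sum_le _ _) ?_
    rw [hS, Finset.mul_sum]
    refine Finset.sum_le_sum fun j _ => ?_
    rw [norm_smul, Real.norm_eq_abs, abs_mul, abs_of_pos (hw j),
      norm_sub_rev]
    calc w j * |(P k).eval (ξ j)| * ‖u (ξ j) - truncExp μ P u (ξ j)‖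
        ≤ w j * |(P k).eval (ξ j)| * δ :=
          mul_le_mul_of_nonneg_left (happrox j)
            (mul_nonneg (hw j).le (abs_nonneg _))
      _ = δ * (w j * |(P k).eval (ξ j)|) := by ring
  -- Cauchy-Schwarz : S^2 ≤ c k
  have hS2 : S ^ 2 ≤ cCoeff μ P k := by
    have hcs := Finset.sum_mul_sq_le_sq_mul_sq Finset.univ
      (fun j : Fin (N + 1) => Real.sqrt (w j))
      (fun j : Fin (N + 1) => Real.sqrt (w j) * |(P k).eval (ξ j)|)
    have h1 : ∀ j : Fin (N + 1),
        Real.sqrt (w j) * (Real.sqrt (w j) * |(P k).eval (ξ j)|)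
          = w j * |(P k).eval (ξ j)| := by
      intro j
      rw [← mul_assoc, Real.mul_self_sqrt (hw j).le]
    have h2 : ∀ j : Fin (N + 1), Real.sqrt (w j) ^ 2 = w j := fun j =>
      Real.sq_sqrt (hw j).le
    have h3 : ∀ j : Fin (N + 1),
        (Real.sqrt (w j) * |(P k).eval (ξ j)|) ^ 2
          = w j * ((P k).eval (ξ j)) ^ 2 := by
      intro j
      rw [mul_pow, Real.sq_sqrt (hw j).le, sq_abs]
    simp only [h1, h2, h3] at hcs
    rw [hsum_w, one_mul, hck] at hcs
    exact hcs
  calc ‖chaosCoeff μ P u k - quadCoeff P ξ w u k‖ ^ 2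
      ≤ (δ * S) ^ 2 := by
        apply pow_le_pow_left₀ (norm_nonneg _) hnorm
    _ = δ ^ 2 * S ^ 2 := by ring
    _ ≤ δ ^ 2 * cCoeff μ P k :=
        mul_le_mul_of_nonneg_left hS2 (sq_nonneg δ)
end

section
/- Under the Gauss quadrature hypotheses, suppose δ ≥ 0 is such that ‖u(ξ_j) − u^N(ξ_j)‖_H ≤ δ for every j = 1, …, N+1 and also ‖u(ξ) − u^N(ξ)‖_H ≤ δ for μ-almost every ξ. Then the pseudo-spectral approximation satisfies the error bound ∫_ℝ ‖u(ξ) − u^{(N)}(ξ)‖_H² μ(dξ) ≤ ∫_ℝ ‖u(ξ) − u^N(ξ)‖_H² μ(dξ) + N·δ², and in particular ∫_ℝ ‖u(ξ) − u^{(N)}(ξ)‖_H² μ(dξ) ≤ (N+1)·δ². -/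
open MeasureTheory

universe u

open RealInnerProductSpace in
/-- Expansion of the L² error of a pseudo-expansion with arbitrary coefficients `b`. -/
theorem aux_expansion {n : ℕ} (μ : Measure ℝ) [IsProbabilityMeasure μ]
    (P : Fin n → Polynomial ℝ)
    (hint : ∀ p : Polynomial ℝ, Integrable (fun x => p.eval x) μ)
    (horth' : ∀ k m : Fin n,
      ∫ x, (P k).eval x * (P m).eval x ∂μ = if k = m then cCoeff μ P k else 0)
    {H : Type u} [NormedAddCommGroup H] [InnerProductSpace ℝ H] [CompleteSpace H]
    (u : ℝ → H) (hmeas : StronglyMeasurable u)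
    (C : ℝ) (hbdd : ∀ x, ‖u x‖ ≤ C) (b : Fin n → H) :
    Integrable (fun x => ‖u x - ∑ k : Fin n, ((cCoeff μ P k)⁻¹ * (P k).eval x) • b k‖ ^ 2) μ ∧
    ∫ x, ‖u x - ∑ k : Fin n, ((cCoeff μ P k)⁻¹ * (P k).eval x) • b k‖ ^ 2 ∂μ =
      (∫ x, ‖u x‖ ^ 2 ∂μ)
        - 2 * ∑ k : Fin n, (cCoeff μ P k)⁻¹ * ⟪chaosCoeff μ P u k, b k⟫
        + ∑ k : Fin n, (cCoeff μ P k)⁻¹ * ((cCoeff μ P k)⁻¹ * ⟪b k, b k⟫ * cCoeff μ P k) := by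
  have hCnn : 0 ≤ C := le_trans (norm_nonneg _) (hbdd 0)
  have hintabs : ∀ p : Polynomial ℝ, Integrable (fun x => |p.eval x|) μ :=
    fun p => (hint p).abs
  -- integrability of `p.eval • u`
  have hL1 : ∀ p : Polynomial ℝ, Integrable (fun x => p.eval x • u x) μ := by
    intro p
    refine Integrable.mono' ((hintabs p).const_mul C) ?_ (Filter.Eventually.of_forall ?_)
    · exact (((Polynomial.continuous p).measurable.stronglyMeasurable).smul hmeas).aestronglyMeasurable
    · intro x
      rw [norm_smul]
      calc ‖p.eval x‖ * ‖u x‖ ≤ ‖p.eval x‖ * C := by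
            exact mul_le_mul_of_nonneg_left (hbdd x) (norm_nonneg _)
        _ = C * |p.eval x| := by rw [Real.norm_eq_abs]; ring
  set c := cCoeff μ P with hc
  set v := chaosCoeff μ P u with hv
  -- pointwise expansion
  have hpt : ∀ x : ℝ, ‖u x - ∑ k : Fin n, ((c k)⁻¹ * (P k).eval x) • b k‖ ^ 2 =
      ‖u x‖ ^ 2 - 2 * (∑ k : Fin n, ((c k)⁻¹ * (P k).eval x) * ⟪u x, b k⟫)
        + ∑ k : Fin n, ∑ m : Fin n,
            ((c k)⁻¹ * (P k).eval x) * (((c m)⁻¹ * (P m).eval x) * ⟪b k, b m⟫) := by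
    intro x
    rw [norm_sub_sq_real]
    have h1 : ⟪u x, ∑ k : Fin n, ((c k)⁻¹ * (P k).eval x) • b k⟫ =
        ∑ k : Fin n, ((c k)⁻¹ * (P k).eval x) * ⟪u x, b k⟫ := by
      rw [inner_sum]
      exact Finset.sum_congr rfl fun k _ => real_inner_smul_right _ _ _
    have h2 : ‖∑ k : Fin n, ((c k)⁻¹ * (P k).eval x) • b k‖ ^ 2 =
        ∑ k : Fin n, ∑ m : Fin n,
          ((c k)⁻¹ * (P k).eval x) * (((c m)⁻¹ * (P m).eval x) * ⟪b k, b m⟫) := by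
      rw [← real_inner_self_eq_norm_sq, sum_inner]
      refine Finset.sum_congr rfl fun k _ => ?_
      rw [real_inner_smul_left, inner_sum, Finset.mul_sum]
      exact Finset.sum_congr rfl fun m _ => by rw [real_inner_smul_right]
    rw [h1, h2]
  have hA : Integrable (fun x => ‖u x‖ ^ 2) μ := by
    refine Integrable.mono' (integrable_const (C ^ 2)) ?_ (Filter.Eventually.of_forall ?_)
    · exact (hmeas.norm.measurable.pow_const 2).aestronglyMeasurable
    · intro x
      rw [Real.norm_eq_abs, abs_of_nonneg (by positivity)]
      exact pow_le_pow_left₀ (norm_nonneg _) (hbdd x) 2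
  have hBk : ∀ k : Fin n, Integrable (fun x => ((c k)⁻¹ * (P k).eval x) * ⟪u x, b k⟫) μ := by
    intro k
    refine Integrable.mono' ((hintabs (P k)).const_mul (|(c k)⁻¹| * (C * ‖b k‖))) ?_
      (Filter.Eventually.of_forall ?_)
    · exact ((((Polynomial.continuous (P k)).measurable.stronglyMeasurable.const_mul
        _).mul (hmeas.inner stronglyMeasurable_const))).aestronglyMeasurable
    · intro x
      rw [Real.norm_eq_abs, abs_mul, abs_mul]
      have h1 : |⟪u x, b k⟫| ≤ C * ‖b k‖ :=
        le_trans (abs_real_inner_le_norm _ _)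
          (mul_le_mul_of_nonneg_right (hbdd x) (norm_nonneg _))
      calc |(c k)⁻¹| * |(P k).eval x| * |⟪u x, b k⟫|
          ≤ |(c k)⁻¹| * |(P k).eval x| * (C * ‖b k‖) := by
            exact mul_le_mul_of_nonneg_left h1 (by positivity)
        _ = |(c k)⁻¹| * (C * ‖b k‖) * |(P k).eval x| := by ring
  have hCkm : ∀ k m : Fin n, Integrable
      (fun x => ((c k)⁻¹ * (P k).eval x) * (((c m)⁻¹ * (P m).eval x) * ⟪b k, b m⟫)) μ := by
    intro k m
    have : Integrable (fun x => (P k).eval x * (P m).eval x) μ := by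
      simpa [Polynomial.eval_mul] using hint (P k * P m)
    have := (this.const_mul ((c k)⁻¹ * (c m)⁻¹)).mul_const ⟪b k, b m⟫
    refine this.congr (Filter.Eventually.of_forall fun x => ?_)
    ring
  have hBint : Integrable (fun x => ∑ k : Fin n, ((c k)⁻¹ * (P k).eval x) * ⟪u x, b k⟫) μ :=
    integrable_finset_sum _ fun k _ => hBk k
  have hCint : Integrable (fun x => ∑ k : Fin n, ∑ m : Fin n,
      ((c k)⁻¹ * (P k).eval x) * (((c m)⁻¹ * (P m).eval x) * ⟪b k, b m⟫)) μ :=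
    integrable_finset_sum _ fun k _ => integrable_finset_sum _ fun m _ => hCkm k m
  have hItot : Integrable
      (fun x => ‖u x - ∑ k : Fin n, ((c k)⁻¹ * (P k).eval x) • b k‖ ^ 2) μ := by
    have := ((hA.sub (hBint.const_mul 2)).add hCint)
    exact this.congr (Filter.Eventually.of_forall fun x => (hpt x).symm)
  refine ⟨hItot, ?_⟩
  have hEB : ∫ x, (∑ k : Fin n, ((c k)⁻¹ * (P k).eval x) * ⟪u x, b k⟫) ∂μ =
      ∑ k : Fin n, (c k)⁻¹ * ⟪v k, b k⟫ := by
    rw [integral_finset_sum _ fun k _ => hBk k]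
    congr 1
    ext k
    have heq : (fun x => ((c k)⁻¹ * (P k).eval x) * ⟪u x, b k⟫) =
        fun x => (c k)⁻¹ * ⟪b k, (P k).eval x • u x⟫ := by
      funext x
      rw [real_inner_smul_right, real_inner_comm]
      ring
    rw [heq, integral_const_mul, integral_inner (hL1 (P k))]
    rw [hv, chaosCoeff, real_inner_comm]
  have hEC : ∫ x, (∑ k : Fin n, ∑ m : Fin n,
      ((c k)⁻¹ * (P k).eval x) * (((c m)⁻¹ * (P m).eval x) * ⟪b k, b m⟫)) ∂μ =
      ∑ k : Fin n, (c k)⁻¹ * ((c k)⁻¹ * ⟪b k, b k⟫ * c k) := by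
    rw [integral_finset_sum _ fun k _ => integrable_finset_sum _ fun m _ => hCkm k m]
    congr 1
    ext k
    rw [integral_finset_sum _ fun m _ => hCkm k m]
    have hterm : ∀ m : Fin n,
        ∫ x, ((c k)⁻¹ * (P k).eval x) * (((c m)⁻¹ * (P m).eval x) * ⟪b k, b m⟫) ∂μ =
        if k = m then (c k)⁻¹ * ((c k)⁻¹ * ⟪b k, b k⟫ * c k) else 0 := by
      intro m
      have heq : (fun x => ((c k)⁻¹ * (P k).eval x) * (((c m)⁻¹ * (P m).eval x) * ⟪b k, b m⟫)) =
          fun x => ((c k)⁻¹ * (c m)⁻¹ * ⟪b k, b m⟫) * ((P k).eval x * (P m).eval x) := by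
        funext x; ring
      rw [heq, integral_const_mul, horth' k m]
      by_cases hkm : k = m
      · subst hkm; simp; ring
      · simp [hkm]
    rw [Finset.sum_congr rfl fun m _ => hterm m]
    simp
  calc ∫ x, ‖u x - ∑ k : Fin n, ((c k)⁻¹ * (P k).eval x) • b k‖ ^ 2 ∂μ
      = ∫ x, (‖u x‖ ^ 2 - 2 * (∑ k : Fin n, ((c k)⁻¹ * (P k).eval x) * ⟪u x, b k⟫)
        + ∑ k : Fin n, ∑ m : Fin n,
            ((c k)⁻¹ * (P k).eval x) * (((c m)⁻¹ * (P m).eval x) * ⟪b k, b m⟫)) ∂μ := by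
        exact integral_congr_ae (Filter.Eventually.of_forall fun x => hpt x)
    _ = _ := by
        have hAB : Integrable (fun x => ‖u x‖ ^ 2
            - 2 * ∑ k : Fin n, ((c k)⁻¹ * (P k).eval x) * ⟪u x, b k⟫) μ :=
          hA.sub (hBint.const_mul 2)
        rw [integral_add hAB hCint, integral_sub hA (hBint.const_mul 2),
          integral_const_mul, hEB, hEC]

open RealInnerProductSpace

/-- `L²(μ)` error bound for the pseudo-spectral approximation:
`∫‖u − u^{(N)}‖² dμ ≤ ∫‖u − u^N‖² dμ + N·δ²`, and in particular
`∫‖u − u^{(N)}‖² dμ ≤ (N+1)·δ²`. -/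
theorem pseudoSpec_error_bound
    (μ : Measure ℝ) [IsProbabilityMeasure μ] (N : ℕ) (hN : 1 ≤ N)
    (P : Fin (N + 1) → Polynomial ℝ)
    (hdeg : ∀ k : Fin (N + 1), (P k).natDegree = (k : ℕ))
    (hint : ∀ p : Polynomial ℝ, Integrable (fun x => p.eval x) μ)
    (horth : ∀ k m : Fin (N + 1), k ≠ m →
      ∫ x, (P k).eval x * (P m).eval x ∂μ = 0)
    (hpos : ∀ k : Fin (N + 1), 0 < cCoeff μ P k)
    (ξ : Fin (N + 1) → ℝ) (w : Fin (N + 1) → ℝ)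
    (hw : ∀ j, 0 < w j)
    (hquad : ∀ h : Polynomial ℝ, h.natDegree ≤ 2 * N + 1 →
      ∫ x, h.eval x ∂μ = ∑ j : Fin (N + 1), w j * h.eval (ξ j))
    (H : Type u) [NormedAddCommGroup H] [InnerProductSpace ℝ H] [CompleteSpace H]
    (u : ℝ → H) (hmeas : StronglyMeasurable u)
    (C : ℝ) (hbdd : ∀ x, ‖u x‖ ≤ C)
    (δ : ℝ) (hδ : 0 ≤ δ)
    (happrox : ∀ j : Fin (N + 1), ‖u (ξ j) - truncExp μ P u (ξ j)‖ ≤ δ)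
    (hae : ∀ᵐ x ∂μ, ‖u x - truncExp μ P u x‖ ≤ δ) :
    (∫ x, ‖u x - pseudoSpec μ P ξ w u x‖ ^ 2 ∂μ ≤
        (∫ x, ‖u x - truncExp μ P u x‖ ^ 2 ∂μ) + N * δ ^ 2) ∧
    ∫ x, ‖u x - pseudoSpec μ P ξ w u x‖ ^ 2 ∂μ ≤ (N + 1) * δ ^ 2 := by
  -- orthogonality with explicit diagonal values
  have horth' : ∀ k m : Fin (N + 1),
      ∫ x, (P k).eval x * (P m).eval x ∂μ = if k = m then cCoeff μ P k else 0 := by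
    intro k m
    by_cases h : k = m
    · subst h
      simp only [if_pos rfl, cCoeff]
      exact integral_congr_ae (Filter.Eventually.of_forall fun x => (pow_two _).symm)
    · simp [h, horth k m h]
  -- the quadrature is exact on products `P_k * P_m`
  have hquadPkPm : ∀ k m : Fin (N + 1),
      ∑ j : Fin (N + 1), w j * ((P k).eval (ξ j) * (P m).eval (ξ j)) =
        if k = m then cCoeff μ P k else 0 := by
    intro k m
    have hd : (P k * P m).natDegree ≤ 2 * N + 1 := by
      refine le_trans (Polynomial.natDegree_mul_le) ?_
      rw [hdeg k, hdeg m]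
      have h1 := k.is_le
      have h2 := m.is_le
      omega
    have h2 := hquad (P k * P m) hd
    simp only [Polynomial.eval_mul] at h2
    rw [← h2, horth']
  have hsumw : ∑ j : Fin (N + 1), w j = 1 := by
    have h := hquad 1 (by simp)
    simpa using h.symm
  -- the discrete orthogonality matrix
  set B : Matrix (Fin (N + 1)) (Fin (N + 1)) ℝ :=
    Matrix.of fun k j => Real.sqrt (w j) * (P k).eval (ξ j) / Real.sqrt (cCoeff μ P k)
    with hB
  have hBBT : B * B.transpose = 1 := by
    ext k m
    simp only [hB, Matrix.mul_apply, Matrix.transpose_apply, Matrix.of_apply,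
      Matrix.one_apply]
    have hstep : ∀ j : Fin (N + 1),
        (Real.sqrt (w j) * (P k).eval (ξ j) / Real.sqrt (cCoeff μ P k)) *
          (Real.sqrt (w j) * (P m).eval (ξ j) / Real.sqrt (cCoeff μ P m)) =
        (Real.sqrt (cCoeff μ P k) * Real.sqrt (cCoeff μ P m))⁻¹ *
          (w j * ((P k).eval (ξ j) * (P m).eval (ξ j))) := by
      intro j
      rw [← Real.mul_self_sqrt (hw j).le]
      field_simp
      rw [Real.sqrt_sq (Real.sqrt_nonneg _)]
    rw [Finset.sum_congr rfl fun j _ => hstep j, ← Finset.mul_sum, hquadPkPm]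
    by_cases hkm : k = m
    · subst hkm
      simp only [if_pos rfl]
      rw [Real.mul_self_sqrt (hpos k).le]
      exact inv_mul_cancel₀ (ne_of_gt (hpos k))
    · simp [hkm]
  have hBTB := mul_eq_one_comm.mp hBBT
  have hinv : ∀ j j' : Fin (N + 1),
      ∑ k : Fin (N + 1), (cCoeff μ P k)⁻¹ * ((P k).eval (ξ j) * (P k).eval (ξ j')) =
        if j = j' then (w j)⁻¹ else 0 := by
    intro j j'
    have h1 : (B.transpose * B) j j' = (1 : Matrix (Fin (N+1)) (Fin (N+1)) ℝ) j j' := by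
      rw [hBTB]
    simp only [hB, Matrix.mul_apply, Matrix.transpose_apply, Matrix.of_apply,
      Matrix.one_apply] at h1
    have h2 : ∀ k : Fin (N + 1),
        (Real.sqrt (w j) * (P k).eval (ξ j) / Real.sqrt (cCoeff μ P k)) *
          (Real.sqrt (w j') * (P k).eval (ξ j') / Real.sqrt (cCoeff μ P k)) =
        (Real.sqrt (w j) * Real.sqrt (w j')) *
          ((cCoeff μ P k)⁻¹ * ((P k).eval (ξ j) * (P k).eval (ξ j'))) := by
      intro k
      rw [div_mul_div_comm, Real.mul_self_sqrt (hpos k).le, div_eq_mul_inv]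
      ring
    rw [Finset.sum_congr rfl fun k _ => h2 k, ← Finset.mul_sum] at h1
    by_cases hjj : j = j'
    · subst hjj
      simp only [if_pos rfl] at h1 ⊢
      rw [Real.mul_self_sqrt (hw j).le] at h1
      simp only [if_true] at h1
      rw [mul_comm] at h1
      exact eq_inv_of_mul_eq_one_left h1
    · simp only [if_neg hjj] at h1 ⊢
      have hne : Real.sqrt (w j) * Real.sqrt (w j') ≠ 0 :=
        ne_of_gt (mul_pos (Real.sqrt_pos.mpr (hw j)) (Real.sqrt_pos.mpr (hw j')))
      exact (mul_eq_zero.mp h1).resolve_left hne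
  -- the quadrature coefficients in terms of the truncation error at the nodes
  have hvk : ∀ k : Fin (N + 1),
      (∑ j : Fin (N + 1), (w j * (P k).eval (ξ j)) • truncExp μ P u (ξ j)) =
        chaosCoeff μ P u k := by
    intro k
    have hstep : ∀ j : Fin (N + 1), (w j * (P k).eval (ξ j)) • truncExp μ P u (ξ j) =
        ∑ m : Fin (N + 1), ((cCoeff μ P m)⁻¹ *
          (w j * ((P k).eval (ξ j) * (P m).eval (ξ j)))) • chaosCoeff μ P u m := by
      intro j
      rw [truncExp, Finset.smul_sum]
      refine Finset.sum_congr rfl fun m _ => ?_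
      rw [smul_smul]
      congr 1
      ring
    rw [Finset.sum_congr rfl fun j _ => hstep j, Finset.sum_comm]
    have hstep2 : ∀ m : Fin (N + 1),
        (∑ j : Fin (N + 1), ((cCoeff μ P m)⁻¹ *
          (w j * ((P k).eval (ξ j) * (P m).eval (ξ j)))) • chaosCoeff μ P u m) =
        ((cCoeff μ P m)⁻¹ * (if k = m then cCoeff μ P k else 0)) • chaosCoeff μ P u m := by
      intro m
      rw [← Finset.sum_smul, ← Finset.mul_sum, hquadPkPm k m]
    rw [Finset.sum_congr rfl fun m _ => hstep2 m]
    rw [Finset.sum_eq_single k]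
    · rw [if_pos rfl, inv_mul_cancel₀ (ne_of_gt (hpos k)), one_smul]
    · intro m _ hm
      rw [if_neg (Ne.symm hm), mul_zero, zero_smul]
    · intro hk
      exact absurd (Finset.mem_univ k) hk
  have hdk : ∀ k : Fin (N + 1), quadCoeff P ξ w u k - chaosCoeff μ P u k =
      ∑ j : Fin (N + 1), (w j * (P k).eval (ξ j)) •
        (u (ξ j) - truncExp μ P u (ξ j)) := by
    intro k
    rw [← hvk k, quadCoeff, ← Finset.sum_sub_distrib]
    exact Finset.sum_congr rfl fun j _ => (smul_sub _ _ _).symm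
  -- the aliasing error bound
  have hkey : ∑ k : Fin (N + 1),
      (cCoeff μ P k)⁻¹ * ‖quadCoeff P ξ w u k - chaosCoeff μ P u k‖ ^ 2 ≤ δ ^ 2 := by
    have h1 : ∀ k : Fin (N + 1),
        (cCoeff μ P k)⁻¹ * ‖quadCoeff P ξ w u k - chaosCoeff μ P u k‖ ^ 2 =
        ∑ j : Fin (N + 1), ∑ j' : Fin (N + 1),
          (w j * w j' * ⟪u (ξ j) - truncExp μ P u (ξ j),
            u (ξ j') - truncExp μ P u (ξ j')⟫) *
          ((cCoeff μ P k)⁻¹ * ((P k).eval (ξ j) * (P k).eval (ξ j'))) := by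
      intro k
      rw [hdk k, ← real_inner_self_eq_norm_sq, sum_inner, Finset.mul_sum]
      refine Finset.sum_congr rfl fun j _ => ?_
      rw [real_inner_smul_left, inner_sum, Finset.mul_sum, Finset.mul_sum]
      refine Finset.sum_congr rfl fun j' _ => ?_
      rw [real_inner_smul_right]
      ring
    calc ∑ k : Fin (N + 1),
        (cCoeff μ P k)⁻¹ * ‖quadCoeff P ξ w u k - chaosCoeff μ P u k‖ ^ 2
        = ∑ j : Fin (N + 1), ∑ j' : Fin (N + 1),
            (w j * w j' * ⟪u (ξ j) - truncExp μ P u (ξ j),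
              u (ξ j') - truncExp μ P u (ξ j')⟫) *
            (∑ k : Fin (N + 1),
              (cCoeff μ P k)⁻¹ * ((P k).eval (ξ j) * (P k).eval (ξ j'))) := by
          rw [Finset.sum_congr rfl fun k _ => h1 k, Finset.sum_comm]
          refine Finset.sum_congr rfl fun j _ => ?_
          rw [Finset.sum_comm]
          refine Finset.sum_congr rfl fun j' _ => ?_
          rw [Finset.mul_sum]
      _ = ∑ j : Fin (N + 1), w j * ‖u (ξ j) - truncExp μ P u (ξ j)‖ ^ 2 := by
          refine Finset.sum_congr rfl fun j _ => ?_
          have hstep : ∀ j' : Fin (N + 1),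
              (w j * w j' * ⟪u (ξ j) - truncExp μ P u (ξ j),
                u (ξ j') - truncExp μ P u (ξ j')⟫) *
              (∑ k : Fin (N + 1),
                (cCoeff μ P k)⁻¹ * ((P k).eval (ξ j) * (P k).eval (ξ j'))) =
              if j' = j then w j * ‖u (ξ j) - truncExp μ P u (ξ j)‖ ^ 2 else 0 := by
            intro j'
            rw [hinv j j']
            by_cases h : j = j'
            · subst h
              rw [if_pos rfl, if_pos rfl, real_inner_self_eq_norm_sq]
              have hwj : w j ≠ 0 := ne_of_gt (hw j)
              field_simp
            · rw [if_neg h, if_neg (Ne.symm h), mul_zero]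
          rw [Finset.sum_congr rfl fun j' _ => hstep j',
            Finset.sum_ite_eq' Finset.univ j
              (fun _ => w j * ‖u (ξ j) - truncExp μ P u (ξ j)‖ ^ 2),
            if_pos (Finset.mem_univ j)]
      _ ≤ ∑ j : Fin (N + 1), w j * δ ^ 2 := by
          refine Finset.sum_le_sum fun j _ => ?_
          exact mul_le_mul_of_nonneg_left
            (pow_le_pow_left₀ (norm_nonneg _) (happrox j) 2) (hw j).le
      _ = δ ^ 2 := by rw [← Finset.sum_mul, hsumw, one_mul]
  -- apply the expansion lemma with the exact and the quadrature coefficients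
  have hv' := aux_expansion μ P hint horth' u hmeas C hbdd (chaosCoeff μ P u)
  have hq' := aux_expansion μ P hint horth' u hmeas C hbdd (quadCoeff P ξ w u)
  have hTeq : (fun x => ∑ k : Fin (N + 1),
      ((cCoeff μ P k)⁻¹ * (P k).eval x) • chaosCoeff μ P u k) = truncExp μ P u := rfl
  have hPeq : (fun x => ∑ k : Fin (N + 1),
      ((cCoeff μ P k)⁻¹ * (P k).eval x) • quadCoeff P ξ w u k) =
      pseudoSpec μ P ξ w u := rfl
  -- the per-coefficient Pythagoras identity
  have hper : ∀ k : Fin (N + 1),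
      (cCoeff μ P k)⁻¹ * ((cCoeff μ P k)⁻¹ *
          ⟪quadCoeff P ξ w u k, quadCoeff P ξ w u k⟫ * cCoeff μ P k) =
      2 * ((cCoeff μ P k)⁻¹ * ⟪chaosCoeff μ P u k, quadCoeff P ξ w u k⟫)
        - 2 * ((cCoeff μ P k)⁻¹ * ⟪chaosCoeff μ P u k, chaosCoeff μ P u k⟫)
        + (cCoeff μ P k)⁻¹ * ((cCoeff μ P k)⁻¹ *
            ⟪chaosCoeff μ P u k, chaosCoeff μ P u k⟫ * cCoeff μ P k)
        + (cCoeff μ P k)⁻¹ * ‖quadCoeff P ξ w u k - chaosCoeff μ P u k‖ ^ 2 := by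
    intro k
    have hc0 : cCoeff μ P k ≠ 0 := ne_of_gt (hpos k)
    have hcc : ∀ X : ℝ, (cCoeff μ P k)⁻¹ * ((cCoeff μ P k)⁻¹ * X * cCoeff μ P k) =
        (cCoeff μ P k)⁻¹ * X := by
      intro X
      field_simp
    rw [hcc, hcc, norm_sub_sq_real, real_inner_self_eq_norm_sq,
      real_inner_self_eq_norm_sq,
      real_inner_comm (chaosCoeff μ P u k) (quadCoeff P ξ w u k)]
    ring
  -- the main splitting identity
  have hsplit : ∫ x, ‖u x - pseudoSpec μ P ξ w u x‖ ^ 2 ∂μ =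
      (∫ x, ‖u x - truncExp μ P u x‖ ^ 2 ∂μ) +
      ∑ k : Fin (N + 1),
        (cCoeff μ P k)⁻¹ * ‖quadCoeff P ξ w u k - chaosCoeff μ P u k‖ ^ 2 := by
    have hq2 := hq'.2
    have hv2 := hv'.2
    rw [show (fun x => ‖u x - ∑ k : Fin (N + 1),
        ((cCoeff μ P k)⁻¹ * (P k).eval x) • quadCoeff P ξ w u k‖ ^ 2) =
        (fun x => ‖u x - pseudoSpec μ P ξ w u x‖ ^ 2) from rfl] at hq2
    rw [show (fun x => ‖u x - ∑ k : Fin (N + 1),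
        ((cCoeff μ P k)⁻¹ * (P k).eval x) • chaosCoeff μ P u k‖ ^ 2) =
        (fun x => ‖u x - truncExp μ P u x‖ ^ 2) from rfl] at hv2
    rw [hq2, hv2]
    rw [Finset.sum_congr rfl fun k (_ : k ∈ Finset.univ) => hper k]
    simp only [Finset.sum_add_distrib, Finset.sum_sub_distrib, ← Finset.mul_sum]
    ring
  -- integrability of the truncation error, and its L² bound
  have hIv : Integrable (fun x => ‖u x - truncExp μ P u x‖ ^ 2) μ := hv'.1
  have hEv : ∫ x, ‖u x - truncExp μ P u x‖ ^ 2 ∂μ ≤ δ ^ 2 := by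
    have h := integral_mono_ae hIv (integrable_const (δ ^ 2))
      (hae.mono fun x hx => pow_le_pow_left₀ (norm_nonneg _) hx 2)
    simpa using h
  have hN1 : (1 : ℝ) ≤ (N : ℝ) := by exact_mod_cast hN
  have hδ2 : (0 : ℝ) ≤ δ ^ 2 := sq_nonneg δ
  constructor
  · rw [hsplit]
    nlinarith [hkey]
  · rw [hsplit]
    nlinarith [hkey, hEv]
end

section
/- For every natural number n, ∫_{−1}^{1} P_n(x)² dx = 2/(2n+1); equivalently, with respect to the uniform probability measure on [−1,1], the nth Legendre polynomial has squared L² norm (1/2)∫_{−1}^{1} P_n(x)² dx = 1/(2n+1). -/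
open MeasureTheory Polynomial intervalIntegral

/-- The `n`-th Legendre polynomial, via the Rodrigues formula
`P_n(x) = (1/(2ⁿ n!)) (d/dx)ⁿ (x² − 1)ⁿ` (so that `P_n(1) = 1`). -/
noncomputable def legendreP (n : ℕ) : Polynomial ℝ :=
  Polynomial.C (1 / ((2 : ℝ) ^ n * n.factorial)) *
    Polynomial.derivative^[n] ((Polynomial.X ^ 2 - 1) ^ n)

noncomputable def legf (n : ℕ) : Polynomial ℝ := (X ^ 2 - 1) ^ n

lemma poly_fund (p : Polynomial ℝ) (a b : ℝ) :
    ∫ x in a..b, (derivative p).eval x = p.eval b - p.eval a := by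
  exact intervalIntegral.integral_deriv_eq_sub' (fun x => p.eval x)
    (funext fun x => p.deriv)
    (fun x _ => (p.hasDerivAt x).differentiableAt)
    ((derivative p).continuous.continuousOn)

lemma poly_ibp (p q : Polynomial ℝ) (a b : ℝ) :
    ∫ x in a..b, (derivative p).eval x * q.eval x =
      p.eval b * q.eval b - p.eval a * q.eval a -
        ∫ x in a..b, p.eval x * (derivative q).eval x := by
  have h := poly_fund (p * q) a b
  rw [derivative_mul] at h
  rw [eq_sub_iff_add_eq, ← intervalIntegral.integral_add (f := fun x => (derivative p).eval x * q.eval x)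
      (g := fun x => p.eval x * (derivative q).eval x)
      (((derivative p).continuous.mul q.continuous).intervalIntegrable a b)
      ((p.continuous.mul (derivative q).continuous).intervalIntegrable a b)]
  simpa using h

lemma legf_ne_zero (n : ℕ) : legf n ≠ 0 := by
  apply pow_ne_zero
  intro h
  have := congrArg (Polynomial.eval (0:ℝ)) h
  simp at this

lemma legf_root_vanish (n k : ℕ) (hk : k < n) (t : ℝ) (ht : t = 1 ∨ t = -1) :
    (derivative^[k] (legf n)).eval t = 0 := by
  apply Polynomial.isRoot_iterate_derivative_of_lt_rootMultiplicity
  refine lt_of_lt_of_le hk ?_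
  rw [Polynomial.le_rootMultiplicity_iff (legf_ne_zero n)]
  apply pow_dvd_pow_of_dvd
  rw [Polynomial.dvd_iff_isRoot]
  rcases ht with h | h <;> simp [h, Polynomial.IsRoot]

lemma legf_iterate_2n (n : ℕ) :
    derivative^[2 * n] (legf n) = C ((2 * n).factorial : ℝ) := by
  have h1 : legf n = (legf n - X ^ (2 * n)) + X ^ (2 * n) := by ring
  have hm : (legf n).Monic := by
    apply Polynomial.Monic.pow
    simpa using Polynomial.monic_X_pow_sub_C (1:ℝ) (n := 2) (by norm_num)
  have hdeg : (legf n).natDegree = 2 * n := by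
    rw [legf, Polynomial.Monic.natDegree_pow
        (by simpa using Polynomial.monic_X_pow_sub_C (1:ℝ) (n := 2) (by norm_num))]
    have : ((X:ℝ[X]) ^ 2 - 1) = X ^ 2 - C 1 := by simp
    rw [this, Polynomial.natDegree_X_pow_sub_C]
    ring
  have h2 : derivative^[2 * n] (legf n - X ^ (2 * n)) = 0 := by
    rcases eq_or_ne (legf n - X ^ (2 * n)) 0 with h | h
    · simp [h]
    · apply Polynomial.iterate_derivative_eq_zero
      rw [Polynomial.natDegree_lt_iff_degree_lt h]
      have := Polynomial.degree_sub_lt (p := legf n) (q := X ^ (2 * n)) ?_ (legf_ne_zero n) ?_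
      · rwa [Polynomial.degree_eq_natDegree (legf_ne_zero n), hdeg] at this
      · rw [Polynomial.degree_eq_natDegree (legf_ne_zero n), hdeg, Polynomial.degree_X_pow]
      · rw [hm.leadingCoeff, Polynomial.leadingCoeff_X_pow]
  have h3 := Polynomial.iterate_derivative_sub (k := 2 * n) (f := legf n) (g := X ^ (2 * n))
  rw [h2, eq_comm, sub_eq_zero] at h3
  rw [h3, Polynomial.iterate_derivative_X_pow_eq_C_mul]
  simp [Nat.descFactorial_self]

lemma ibp_steps (n : ℕ) : ∀ k, k ≤ n →
    (∫ x in (-1:ℝ)..1, ((derivative^[n] (legf n)).eval x) ^ 2) =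
      (-1:ℝ) ^ k *
        ∫ x in (-1:ℝ)..1,
          (derivative^[n - k] (legf n)).eval x * (derivative^[n + k] (legf n)).eval x := by
  intro k
  induction k with
  | zero => intro _; simp [sq]
  | succ k ih =>
    intro hk
    rw [ih (Nat.le_of_succ_le hk)]
    have hnk : n - k = (n - (k + 1)) + 1 := by omega
    have hsplit : derivative^[n - k] (legf n) =
        derivative (derivative^[n - (k + 1)] (legf n)) := by
      rw [hnk, Function.iterate_succ_apply']
    rw [hsplit, poly_ibp]
    rw [legf_root_vanish n (n - (k+1)) (by omega) 1 (Or.inl rfl),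
        legf_root_vanish n (n - (k+1)) (by omega) (-1) (Or.inr rfl)]
    have : derivative (derivative^[n + k] (legf n)) = derivative^[n + (k + 1)] (legf n) := by
      rw [Nat.add_succ, Function.iterate_succ_apply']
    rw [this]
    ring

noncomputable def Jint (n : ℕ) : ℝ := ∫ x in (-1:ℝ)..1, (legf n).eval x

lemma Jint_succ (n : ℕ) :
    (2 * (n:ℝ) + 3) * Jint (n + 1) + (2 * (n:ℝ) + 2) * Jint n = 0 := by
  have key : derivative (X * legf (n + 1)) =
      C (2 * (n:ℝ) + 3) * legf (n + 1) + C (2 * (n:ℝ) + 2) * legf n := by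
    rw [legf, legf, derivative_mul, derivative_X, derivative_pow]
    simp only [derivative_sub, derivative_one, derivative_X_pow]
    simp only [map_add, map_mul, map_ofNat, Polynomial.C_eq_natCast, map_one, Nat.cast_add, Nat.cast_one]
    push_cast
    ring
  have h0 : ∫ x in (-1:ℝ)..1, (derivative (X * legf (n+1))).eval x = 0 := by
    rw [poly_fund]
    simp [legf]
  rw [key] at h0
  have hint : ∫ x in (-1:ℝ)..1,
      (C (2 * (n:ℝ) + 3) * legf (n + 1) + C (2 * (n:ℝ) + 2) * legf n).eval x =
      (2 * (n:ℝ) + 3) * Jint (n + 1) + (2 * (n:ℝ) + 2) * Jint n := by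
    simp only [Polynomial.eval_add, Polynomial.eval_mul, Polynomial.eval_C]
    rw [intervalIntegral.integral_add (f := fun x => (2 * (n:ℝ) + 3) * (legf (n+1)).eval x)
        (g := fun x => (2 * (n:ℝ) + 2) * (legf n).eval x)
        ((continuous_const.mul (legf (n+1)).continuous).intervalIntegrable _ _)
        ((continuous_const.mul (legf n).continuous).intervalIntegrable _ _),
      intervalIntegral.integral_const_mul, intervalIntegral.integral_const_mul]
    rfl
  rw [hint] at h0
  exact h0

lemma Jint_eq (n : ℕ) :
    Jint n = (-1:ℝ) ^ n * 2 ^ (2 * n + 1) * (n.factorial : ℝ) ^ 2 /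
      ((2 * n + 1).factorial : ℝ) := by
  induction n with
  | zero => simp [Jint, legf]; norm_num
  | succ n ih =>
    have hrec := Jint_succ n
    have h3 : (2 * (n:ℝ) + 3) ≠ 0 := by positivity
    have hJ : Jint (n + 1) = -(2 * (n:ℝ) + 2) / (2 * (n:ℝ) + 3) * Jint n := by
      field_simp
      linarith
    rw [hJ, ih]
    have hfac1 : ((2 * (n + 1) + 1).factorial : ℝ) =
        (2 * (n:ℝ) + 3) * (2 * (n:ℝ) + 2) * ((2 * n + 1).factorial : ℝ) := by
      have : 2 * (n + 1) + 1 = (2 * n + 1) + 1 + 1 := by ring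
      rw [this, Nat.factorial_succ, Nat.factorial_succ]
      push_cast
      ring
    have hfac2 : ((n + 1).factorial : ℝ) = ((n:ℝ) + 1) * (n.factorial : ℝ) := by
      rw [Nat.factorial_succ]; push_cast; ring
    have hne1 : ((2 * n + 1).factorial : ℝ) ≠ 0 := by
      exact_mod_cast Nat.factorial_ne_zero _
    rw [hfac1, hfac2]
    push_cast
    field_simp
    ring

/-- Normalization of the Legendre polynomials:
`∫_{−1}^{1} P_n(x)² dx = 2/(2n+1)`; equivalently, with respect to the uniform
probability measure on `[−1,1]`, the squared `L²` norm is `1/(2n+1)`. -/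
theorem legendreP_sq_integral (n : ℕ) :
    (∫ x in Set.Icc (-1 : ℝ) 1, ((legendreP n).eval x) ^ 2) =
        2 / (2 * (n : ℝ) + 1) ∧
    (1 / 2) * ∫ x in Set.Icc (-1 : ℝ) 1, ((legendreP n).eval x) ^ 2 =
        1 / (2 * (n : ℝ) + 1) := by
  have hIcc : (∫ x in Set.Icc (-1 : ℝ) 1, ((legendreP n).eval x) ^ 2) =
      ∫ x in (-1:ℝ)..1, ((legendreP n).eval x) ^ 2 := by
    rw [intervalIntegral.integral_of_le (by norm_num : (-1:ℝ) ≤ 1),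
      integral_Icc_eq_integral_Ioc]
  set c : ℝ := 1 / ((2 : ℝ) ^ n * n.factorial) with hc
  have hsq : ∀ x : ℝ, ((legendreP n).eval x) ^ 2 =
      c ^ 2 * ((derivative^[n] (legf n)).eval x) ^ 2 := by
    intro x
    rw [legendreP, Polynomial.eval_mul, Polynomial.eval_C]
    rw [show ((X:ℝ[X]) ^ 2 - 1) ^ n = legf n from rfl]
    ring
  have hmain : (∫ x in (-1:ℝ)..1, ((legendreP n).eval x) ^ 2) =
      c ^ 2 * ∫ x in (-1:ℝ)..1, ((derivative^[n] (legf n)).eval x) ^ 2 := by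
    rw [← intervalIntegral.integral_const_mul]
    exact intervalIntegral.integral_congr (fun x _ => hsq x)
  have hibp := ibp_steps n n le_rfl
  rw [Nat.sub_self, Function.iterate_zero_apply, show n + n = 2 * n by ring,
    legf_iterate_2n] at hibp
  have hlast : (∫ x in (-1:ℝ)..1, (legf n).eval x *
      (C ((2 * n).factorial : ℝ)).eval x) = ((2 * n).factorial : ℝ) * Jint n := by
    simp only [Polynomial.eval_C]
    rw [intervalIntegral.integral_mul_const, mul_comm]
    rfl
  rw [hlast] at hibp
  have total : (∫ x in Set.Icc (-1 : ℝ) 1, ((legendreP n).eval x) ^ 2) =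
      c ^ 2 * ((-1:ℝ) ^ n * (((2 * n).factorial : ℝ) * Jint n)) := by
    rw [hIcc, hmain, hibp]
  rw [Jint_eq] at total
  have h1 : ((n.factorial : ℝ)) ≠ 0 := by exact_mod_cast Nat.factorial_ne_zero n
  have h2 : ((2 * n).factorial : ℝ) ≠ 0 := by exact_mod_cast Nat.factorial_ne_zero _
  have h3 : ((2 * n + 1).factorial : ℝ) =
      (2 * (n:ℝ) + 1) * ((2 * n).factorial : ℝ) := by
    rw [Nat.factorial_succ]; push_cast; ring
  have h4 : (2 * (n:ℝ) + 1) ≠ 0 := by positivity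
  have h5 : ((2:ℝ) ^ n) ≠ 0 := by positivity
  have hval : (∫ x in Set.Icc (-1 : ℝ) 1, ((legendreP n).eval x) ^ 2) =
      2 / (2 * (n : ℝ) + 1) := by
    rw [total, hc, h3]
    have hsgn : ((-1:ℝ)) ^ n * (-1:ℝ) ^ n = 1 := by
      rw [← pow_add, ← two_mul, pow_mul]; norm_num
    rw [show (2:ℝ) ^ (2 * n + 1) = 2 * ((2:ℝ)^n)^2 by rw [pow_add, pow_mul']; ring]
    generalize ((-1:ℝ)) ^ n = s at hsgn ⊢
    field_simp
    linear_combination hsgn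
  exact ⟨hval, by rw [hval]; ring⟩
end

section
/- For all natural numbers m and n, the probabilists' Hermite polynomials satisfy the linearization identity He_m(x) · He_n(x) = Σ_{k=0}^{min(m,n)} (m! n!)/((m−k)! (n−k)! k!) · He_{m+n−2k}(x), as an identity of polynomials with rational (in fact natural-number) coefficients: the coefficient of He_{m+n−2k} equals C(m,k)·C(n,k)·k!. -/
open Polynomial

private lemma derivH : ∀ n : ℕ, derivative (hermite n) = (n : ℤ[X]) * hermite (n - 1) ∧
    derivative (hermite (n+1)) = ((n+1 : ℕ) : ℤ[X]) * hermite n := by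
  intro n
  induction n with
  | zero =>
    constructor
    · simp [hermite_zero]
    · rw [hermite_succ]; simp [hermite_zero]
  | succ j ih =>
    refine ⟨ih.2, ?_⟩
    rw [hermite_succ (j+1), derivative_sub, derivative_mul, derivative_X, ih.2,
      derivative_mul, ih.1]
    rw [hermite_succ j, ih.1]
    simp only [derivative_natCast, zero_mul, zero_add]
    push_cast
    ring

private noncomputable def Hq (n : ℕ) : ℚ[X] := (hermite n).map (Int.castRingHom ℚ)

private lemma Hq_succ (n : ℕ) : Hq (n+1) = X * Hq n - ((n:ℕ) : ℚ[X]) * Hq (n-1) := by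
  unfold Hq
  rw [hermite_succ, (derivH n).1]
  push_cast [Polynomial.map_sub, Polynomial.map_mul, Polynomial.map_X, Polynomial.map_natCast]
  ring

private lemma X_mul_Hq (n : ℕ) : X * Hq n = Hq (n+1) + ((n:ℕ) : ℚ[X]) * Hq (n-1) := by
  rw [Hq_succ]; ring

private def aco (m n k : ℕ) : ℕ := m.choose k * n.choose k * k.factorial

private lemma Hq_zero : Hq 0 = 1 := by simp [Hq, hermite_zero]

private lemma base0 (m : ℕ) : Hq m * Hq 0 = ∑ k ∈ Finset.range (0+1),
    C ((aco m 0 k : ℚ)) * Hq (m + 0 - 2*k) := by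
  simp [Hq_zero, aco]

private lemma base1 (m : ℕ) : Hq m * Hq 1 = ∑ k ∈ Finset.range (1+1),
    C ((aco m 1 k : ℚ)) * Hq (m + 1 - 2*k) := by
  have h1 : Hq 1 = X := by simp [Hq, hermite_one]
  rw [h1, mul_comm, X_mul_Hq]
  rw [Finset.sum_range_succ, Finset.sum_range_one]
  simp [aco]

private lemma key (m n k : ℕ) (hk : k ≤ n + 1) :
    (aco m (n+2) (k+1) : ℚ) = (aco m (n+1) (k+1) : ℚ)
      + ((m + n + 1 - 2*k : ℕ) : ℚ) * (aco m (n+1) k : ℚ)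
      - ((n:ℚ) + 1) * (aco m n k : ℚ) := by
  rcases le_or_gt k m with hm | hm
  · have hsub : 2*k ≤ m + n + 1 := by omega
    have e1 : (m.choose (k+1) : ℚ) * (k+1) = (m.choose k : ℚ) * ((m:ℚ) - k) := by
      have := Nat.choose_succ_right_eq m k
      have hc : ((m.choose (k+1) * (k+1) : ℕ) : ℚ) = ((m.choose k * (m - k) : ℕ) : ℚ) := by
        exact_mod_cast congrArg (Nat.cast (R := ℚ)) this
      push_cast [Nat.cast_sub hm] at hc
      convert hc using 2 <;> push_cast <;> ring
    have e4 : ((n:ℚ) + 1) * (n.choose k : ℚ) = ((n:ℚ) + 1 - k) * ((n+1).choose k : ℚ) := by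
      have h1 := Nat.add_one_mul_choose_eq n k
      have h2 := Nat.choose_succ_right_eq (n+1) k
      have hc1 : ((Nat.succ n * n.choose k : ℕ) : ℚ) = (((n+1).choose (k+1) * (k+1) : ℕ) : ℚ) :=
        by exact_mod_cast congrArg (Nat.cast (R := ℚ)) h1
      have hc2 : (((n+1).choose (k+1) * (k+1) : ℕ) : ℚ) = (((n+1).choose k * (n + 1 - k) : ℕ) : ℚ) :=
        by exact_mod_cast congrArg (Nat.cast (R := ℚ)) h2
      rw [hc2] at hc1
      push_cast [Nat.cast_sub hk] at hc1
      push_cast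
      linarith [hc1]
    have e3 : ((n+2).choose (k+1) : ℚ) = ((n+1).choose k : ℚ) + ((n+1).choose (k+1) : ℚ) := by
      exact_mod_cast congrArg (Nat.cast (R := ℚ)) (Nat.choose_succ_succ (n+1) k)
    unfold aco
    push_cast [Nat.cast_sub hsub, Nat.factorial_succ, e3]
    linear_combination ((n+1).choose k : ℚ) * (k.factorial : ℚ) * e1
      + (m.choose k : ℚ) * (k.factorial : ℚ) * e4
  · have h0 : m.choose k = 0 := Nat.choose_eq_zero_of_lt hm
    have h1 : m.choose (k+1) = 0 := Nat.choose_eq_zero_of_lt (by omega)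
    unfold aco
    rw [h0, h1]
    push_cast
    ring

private lemma step (j : ℕ)
    (h0 : ∀ m, Hq m * Hq j = ∑ k ∈ Finset.range (j+1),
      C ((aco m j k : ℚ)) * Hq (m + j - 2*k))
    (h1 : ∀ m, Hq m * Hq (j+1) = ∑ k ∈ Finset.range (j+2),
      C ((aco m (j+1) k : ℚ)) * Hq (m + (j+1) - 2*k)) :
    ∀ m, Hq m * Hq (j+2) = ∑ k ∈ Finset.range (j+3),
      C ((aco m (j+2) k : ℚ)) * Hq (m + (j+2) - 2*k) := by
  intro m
  have hrec : Hq (j+2) = X * Hq (j+1) - ((j+1 : ℕ) : ℚ[X]) * Hq j := by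
    simpa using Hq_succ (j+1)
  have expand : Hq m * Hq (j+2) =
      (∑ k ∈ Finset.range (j+2), C ((aco m (j+1) k : ℚ)) * Hq (m+(j+2)-2*k))
      + (∑ k ∈ Finset.range (j+2),
          C (((m+j+1-2*k) * aco m (j+1) k : ℕ) : ℚ) * Hq (m+j-2*k))
      - (∑ k ∈ Finset.range (j+2),
          C (((j+1) * aco m j k : ℕ) : ℚ) * Hq (m+j-2*k)) := by
    have hmul : Hq m * Hq (j+2)
        = X * (Hq m * Hq (j+1)) - ((j+1:ℕ) : ℚ[X]) * (Hq m * Hq j) := by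
      rw [hrec]; ring
    rw [hmul, h1 m, h0 m, Finset.mul_sum, Finset.mul_sum]
    have hXsum : ∑ k ∈ Finset.range (j+2),
        X * (C ((aco m (j+1) k : ℚ)) * Hq (m+(j+1)-2*k)) =
        ∑ k ∈ Finset.range (j+2), (C ((aco m (j+1) k : ℚ)) * Hq (m+(j+2)-2*k)
          + C (((m+j+1-2*k) * aco m (j+1) k : ℕ) : ℚ) * Hq (m+j-2*k)) := by
      refine Finset.sum_congr rfl (fun k hk => ?_)
      rcases le_or_gt k m with hm | hm
      · have hk' : k ≤ j+1 := Finset.mem_range_succ_iff.mp hk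
        have i1 : m + (j+1) - 2*k + 1 = m + (j+2) - 2*k := by omega
        have i2 : m + (j+1) - 2*k - 1 = m + j - 2*k := by omega
        have i3 : m + (j+1) - 2*k = m + j + 1 - 2*k := by omega
        rw [mul_left_comm, X_mul_Hq (m+(j+1)-2*k), i1, i2, i3]
        simp only [Nat.cast_mul, map_mul, map_natCast]
        ring
      · have hc : m.choose k = 0 := Nat.choose_eq_zero_of_lt hm
        simp [aco, hc]
    have hDsum : ∑ k ∈ Finset.range (j+1),
        ((j+1:ℕ):ℚ[X]) * (C ((aco m j k : ℚ)) * Hq (m+j-2*k)) =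
        ∑ k ∈ Finset.range (j+2), C (((j+1) * aco m j k : ℕ) : ℚ) * Hq (m+j-2*k) := by
      rw [Finset.sum_range_succ
        (fun k => C (((j+1) * aco m j k : ℕ) : ℚ) * Hq (m+j-2*k)) (j+1)]
      have hz : aco m j (j+1) = 0 := by
        simp [aco, Nat.choose_eq_zero_of_lt (Nat.lt_succ_self j)]
      rw [hz]
      simp only [Nat.mul_zero, Nat.cast_zero, map_zero, zero_mul, add_zero]
      refine Finset.sum_congr rfl (fun k hk => ?_)
      simp only [Nat.cast_mul, map_mul, map_natCast]
      ring
    rw [hXsum, Finset.sum_add_distrib, hDsum]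
  rw [expand]
  have hT : (∑ k ∈ Finset.range (j+3), C ((aco m (j+2) k : ℚ)) * Hq (m+(j+2)-2*k))
      - (∑ k ∈ Finset.range (j+2), C ((aco m (j+1) k : ℚ)) * Hq (m+(j+2)-2*k))
      = (∑ k ∈ Finset.range (j+2),
          C (((m+j+1-2*k) * aco m (j+1) k : ℕ) : ℚ) * Hq (m+j-2*k))
      - (∑ k ∈ Finset.range (j+2),
          C (((j+1) * aco m j k : ℕ) : ℚ) * Hq (m+j-2*k)) := by
    have hA3 : (∑ k ∈ Finset.range (j+2), C ((aco m (j+1) k : ℚ)) * Hq (m+(j+2)-2*k))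
        = ∑ k ∈ Finset.range (j+3), C ((aco m (j+1) k : ℚ)) * Hq (m+(j+2)-2*k) := by
      rw [Finset.sum_range_succ
        (fun k => C ((aco m (j+1) k : ℚ)) * Hq (m+(j+2)-2*k)) (j+2)]
      have hz : aco m (j+1) (j+2) = 0 := by
        simp [aco, Nat.choose_eq_zero_of_lt (Nat.lt_succ_self (j+1))]
      rw [hz]
      simp
    rw [hA3, ← Finset.sum_sub_distrib]
    rw [Finset.sum_range_succ'
      (fun k => C ((aco m (j+2) k : ℚ)) * Hq (m+(j+2)-2*k)
        - C ((aco m (j+1) k : ℚ)) * Hq (m+(j+2)-2*k)) (j+2)]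
    have h00 : C ((aco m (j+2) 0 : ℚ)) * Hq (m+(j+2)-2*0)
        - C ((aco m (j+1) 0 : ℚ)) * Hq (m+(j+2)-2*0) = 0 := by
      simp [aco]
    rw [h00, add_zero, ← Finset.sum_sub_distrib]
    refine Finset.sum_congr rfl (fun k hk => ?_)
    have hk' : k ≤ j+1 := Finset.mem_range_succ_iff.mp hk
    have hidx : m + (j+2) - 2*(k+1) = m + j - 2*k := by omega
    rw [hidx]
    have hkey := key m j k hk'
    have hco : (aco m (j+2) (k+1) : ℚ) - (aco m (j+1) (k+1) : ℚ)
        = (((m+j+1-2*k) * aco m (j+1) k : ℕ) : ℚ) - (((j+1) * aco m j k : ℕ) : ℚ) := by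
      push_cast [Nat.cast_mul]
      linarith [hkey]
    calc C ((aco m (j+2) (k+1) : ℚ)) * Hq (m+j-2*k)
        - C ((aco m (j+1) (k+1) : ℚ)) * Hq (m+j-2*k)
        = C ((aco m (j+2) (k+1) : ℚ) - (aco m (j+1) (k+1) : ℚ)) * Hq (m+j-2*k) := by
          rw [map_sub]; ring
      _ = C ((((m+j+1-2*k) * aco m (j+1) k : ℕ) : ℚ)
            - (((j+1) * aco m j k : ℕ) : ℚ)) * Hq (m+j-2*k) := by rw [hco]
      _ = _ := by rw [map_sub]; ring
  linear_combination -hT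

private lemma lin : ∀ n, ∀ m, Hq m * Hq n =
    ∑ k ∈ Finset.range (n+1), C ((aco m n k : ℚ)) * Hq (m + n - 2*k) := by
  intro n
  induction n using Nat.strong_induction_on with
  | _ n ih =>
    match n with
    | 0 => exact base0
    | 1 => exact base1
    | (j+2) => exact step j (ih j (by omega)) (ih (j+1) (by omega))

/-- Linearization identity for products of probabilists' Hermite polynomials:
`He_m · He_n = Σ_{k=0}^{min(m,n)} (m! n!)/((m−k)! (n−k)! k!) · He_{m+n−2k}`,
with the coefficient of `He_{m+n−2k}` equal to `C(m,k)·C(n,k)·k!`. -/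
theorem hermite_mul_linearization (m n : ℕ) :
    ((Polynomial.hermite m).map (Int.castRingHom ℚ)) *
        ((Polynomial.hermite n).map (Int.castRingHom ℚ)) =
      ∑ k ∈ Finset.range (min m n + 1),
        Polynomial.C
            ((m.factorial * n.factorial : ℚ) /
              ((m - k).factorial * ((n - k).factorial * k.factorial))) *
          ((Polynomial.hermite (m + n - 2 * k)).map (Int.castRingHom ℚ)) ∧
    ∀ k ≤ min m n,
      (m.factorial * n.factorial : ℚ) /
          ((m - k).factorial * ((n - k).factorial * k.factorial)) =
        ((m.choose k * n.choose k * k.factorial : ℕ) : ℚ) := by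
  have part2 : ∀ k ≤ min m n,
      (m.factorial * n.factorial : ℚ) /
          ((m - k).factorial * ((n - k).factorial * k.factorial)) =
        ((m.choose k * n.choose k * k.factorial : ℕ) : ℚ) := by
    intro k hk
    have hm : k ≤ m := le_trans hk (min_le_left m n)
    have hn : k ≤ n := le_trans hk (min_le_right m n)
    have hne : (((m - k).factorial : ℚ) * ((n - k).factorial * k.factorial)) ≠ 0 := by
      push_cast
      exact_mod_cast Nat.mul_ne_zero (m-k).factorial_ne_zero
        (Nat.mul_ne_zero (n-k).factorial_ne_zero k.factorial_ne_zero)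
    rw [div_eq_iff hne, eq_comm]
    have hN : m.choose k * n.choose k * k.factorial
        * ((m - k).factorial * ((n - k).factorial * k.factorial))
        = m.factorial * n.factorial := by
      rw [← Nat.choose_mul_factorial_mul_factorial hm,
        ← Nat.choose_mul_factorial_mul_factorial hn]
      ring
    exact_mod_cast congrArg (Nat.cast (R := ℚ)) hN
  refine ⟨?_, part2⟩
  have hlin := lin n m
  simp only [Hq] at hlin
  rw [hlin]
  have hz : ∀ k ∈ Finset.range (n+1), k ∉ Finset.range (min m n + 1) →
      C ((aco m n k : ℚ)) * (hermite (m+n-2*k)).map (Int.castRingHom ℚ) = 0 := by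
    intro k h1 h2
    simp only [Finset.mem_range] at h1 h2
    have hmk : m < k := by omega
    simp [aco, Nat.choose_eq_zero_of_lt hmk]
  rw [← Finset.sum_subset (Finset.range_subset_range.mpr (by omega)) hz]
  refine Finset.sum_congr rfl (fun k hk => ?_)
  rw [part2 k (Finset.mem_range_succ_iff.mp hk)]
  rfl
end
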